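/- Let a, b ∈ ℝ³ be unit vectors with a × b ≠ 0, and let t ∈ ℝ³ with a × t ≠ 0 and b × t ≠ 0. Suppose the two rays intersect: there exist λ₀ > 0 and λ₁ > 0 with t + λ₀·a = λ₁·b. Then the inverse-depth-weighted midpoint recovers the intersection point: (‖a × t‖/(‖a × t‖ + ‖b × t‖)) · (t + (‖b × t‖/‖a × b‖)·(a + b)) = λ₁·b. -/

import Mathlib

open scoped RealInnerProductSpace
open Matrix

abbrev E3 := EuclideanSpace ℝ (Fin 3)

/-- Cross product on `EuclideanSpace ℝ (Fin 3)`. -/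
noncomputable def cross3 (a b : E3) : E3 :=
  (WithLp.equiv 2 (Fin 3 → ℝ)).symm
    (crossProduct ((WithLp.equiv 2 (Fin 3 → ℝ)) a) ((WithLp.equiv 2 (Fin 3 → ℝ)) b))

lemma cross3_smul_right (a u : E3) (x : ℝ) : cross3 a (x • u) = x • cross3 a u := by
  simp [cross3, WithLp.ofLp_smul, WithLp.toLp_smul, WithLp.equiv_symm_apply, _root_.map_smul]

lemma cross3_sub_right (a u v : E3) : cross3 a (u - v) = cross3 a u - cross3 a v := by
  simp [cross3, WithLp.ofLp_sub, WithLp.toLp_sub, WithLp.equiv_symm_apply, map_sub]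

lemma cross3_self (a : E3) : cross3 a a = 0 := by
  simp [cross3, cross_self]

lemma cross3_anticomm (a b : E3) : cross3 a b = - cross3 b a := by
  rw [cross3, cross3, ← cross_anticomm, WithLp.equiv_symm_apply, WithLp.toLp_neg]

theorem stmt_6 (a b t : E3) (ha : ‖a‖ = 1) (hb : ‖b‖ = 1) (hab : cross3 a b ≠ 0)
    (hat : cross3 a t ≠ 0) (hbt : cross3 b t ≠ 0)
    (l₀ l₁ : ℝ) (h₀ : 0 < l₀) (h₁ : 0 < l₁) (hint : t + l₀ • a = l₁ • b) :
    (‖cross3 a t‖ / (‖cross3 a t‖ + ‖cross3 b t‖)) •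
      (t + (‖cross3 b t‖ / ‖cross3 a b‖) • (a + b)) = l₁ • b := by
  have ht : t = l₁ • b - l₀ • a := by
    rw [← hint]; abel
  have hAT : cross3 a t = l₁ • cross3 a b := by
    rw [ht, cross3_sub_right, cross3_smul_right, cross3_smul_right, cross3_self]
    simp
  have hBT : cross3 b t = l₀ • cross3 a b := by
    rw [ht, cross3_sub_right, cross3_smul_right, cross3_smul_right, cross3_self,
      cross3_anticomm b a]
    simp
  have hc : (0:ℝ) < ‖cross3 a b‖ := norm_pos_iff.mpr hab
  rw [hAT, hBT, norm_smul, norm_smul, Real.norm_eq_abs, Real.norm_eq_abs,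
    abs_of_pos h₀, abs_of_pos h₁]
  have h1 : l₀ * ‖cross3 a b‖ / ‖cross3 a b‖ = l₀ := by
    field_simp
  rw [h1, ht]
  have h2 : (l₁ • b - l₀ • a) + l₀ • (a + b) = (l₁ + l₀) • b := by
    module
  rw [h2, smul_smul]
  congr 1
  field_simp
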